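/- For every integer n ≥ 1, every ξ > 0 and every θ₀ ∈ ℝ, the curve 𝐔₀ᵉ(T) = (𝒰₀ᵉ(T), 𝒱₀ᵉ(T), d𝒰₀ᵉ/dT(T), d𝒱₀ᵉ/dT(T)), where 𝒰₀ᵉ(T) = cos(θ₀ − t(T)/2)·sin(nT), 𝒱₀ᵉ(T) = sin(θ₀ − t(T)/2)·sin(nT) and t(T) = 2[T − cos(nT)sin(nT)/n]·ξ³, is the solution of the unperturbed system 𝐔' = F₀(𝐔) with initial condition 𝐔₀ᵉ(0) = (0, 0, n·cos θ₀, n·sin θ₀); that is, 𝒰₀ᵉ and 𝒱₀ᵉ satisfy d²𝒰₀ᵉ/dT² = −n²𝒰₀ᵉ + 8(𝒰₀ᵉ²+𝒱₀ᵉ²)(d𝒱₀ᵉ/dT)ξ³ + 12(𝒰₀ᵉ²+𝒱₀ᵉ²)²𝒰₀ᵉξ⁶ and d²𝒱₀ᵉ/dT² = −n²𝒱₀ᵉ − 8(𝒰₀ᵉ²+𝒱₀ᵉ²)(d𝒰₀ᵉ/dT)ξ³ + 12(𝒰₀ᵉ²+𝒱₀ᵉ²)²𝒱₀ᵉξ⁶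 for all T ∈ ℝ. -/

import Mathlib

open Real Set

noncomputable section

/-- The sidereal time `t(T) = 2[T − cos(nT)sin(nT)/n]ξ³`. -/
def tOf (n : ℕ) (ξ : ℝ) (T : ℝ) : ℝ :=
  2*(T - Real.cos ((n:ℝ)*T)*Real.sin ((n:ℝ)*T)/(n:ℝ))*ξ^3

/-- The first component `𝒰₀ᵉ(T) = cos(θ₀ − t(T)/2)·sin(nT)` of the unperturbed
ejection solution. -/
def U0e (n : ℕ) (ξ θ₀ : ℝ) (T : ℝ) : ℝ :=
  Real.cos (θ₀ - tOf n ξ T/2) * Real.sin ((n:ℝ)*T)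

/-- The second component `𝒱₀ᵉ(T) = sin(θ₀ − t(T)/2)·sin(nT)` of the unperturbed
ejection solution. -/
def V0e (n : ℕ) (ξ θ₀ : ℝ) (T : ℝ) : ℝ :=
  Real.sin (θ₀ - tOf n ξ T/2) * Real.sin ((n:ℝ)*T)

/-- First derivative of `U0e`. -/
def dUf (n : ℕ) (ξ θ₀ : ℝ) (T : ℝ) : ℝ :=
  2 * Real.sin (θ₀ - tOf n ξ T/2) * Real.sin ((n:ℝ)*T)^3 * ξ^3
  + (n:ℝ) * Real.cos (θ₀ - tOf n ξ T/2) * Real.cos ((n:ℝ)*T)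

/-- First derivative of `V0e`. -/
def dVf (n : ℕ) (ξ θ₀ : ℝ) (T : ℝ) : ℝ :=
  -2 * Real.cos (θ₀ - tOf n ξ T/2) * Real.sin ((n:ℝ)*T)^3 * ξ^3
  + (n:ℝ) * Real.sin (θ₀ - tOf n ξ T/2) * Real.cos ((n:ℝ)*T)

lemma hd_nT (n : ℕ) (T : ℝ) : HasDerivAt (fun x : ℝ => (n:ℝ)*x) (n:ℝ) T := by
  simpa using (hasDerivAt_id T).const_mul (n:ℝ)

lemma hd_sin (n : ℕ) (T : ℝ) :
    HasDerivAt (fun x : ℝ => Real.sin ((n:ℝ)*x)) ((n:ℝ) * Real.cos ((n:ℝ)*T)) T := by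
  refine ((Real.hasDerivAt_sin ((n:ℝ)*T)).comp T (hd_nT n T)).congr_deriv ?_
  ring

lemma hd_cos (n : ℕ) (T : ℝ) :
    HasDerivAt (fun x : ℝ => Real.cos ((n:ℝ)*x)) (-((n:ℝ) * Real.sin ((n:ℝ)*T))) T := by
  refine ((Real.hasDerivAt_cos ((n:ℝ)*T)).comp T (hd_nT n T)).congr_deriv ?_
  ring

lemma hd_th (n : ℕ) (hn : (n:ℝ) ≠ 0) (ξ θ₀ T : ℝ) :
    HasDerivAt (fun x => θ₀ - tOf n ξ x / 2)
      (-(2 * Real.sin ((n:ℝ)*T)^2 * ξ^3)) T := by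
  have h1 : HasDerivAt (fun x : ℝ => Real.cos ((n:ℝ)*x) * Real.sin ((n:ℝ)*x))
      (-((n:ℝ) * Real.sin ((n:ℝ)*T)) * Real.sin ((n:ℝ)*T)
        + Real.cos ((n:ℝ)*T) * ((n:ℝ) * Real.cos ((n:ℝ)*T))) T :=
    (hd_cos n T).mul (hd_sin n T)
  have h2 := (((((hasDerivAt_id T).sub (h1.div_const (n:ℝ))).const_mul
      2).mul_const (ξ^3)).div_const 2).const_sub θ₀
  have heq : ∀ x : ℝ, θ₀ - tOf n ξ x / 2
      = θ₀ - 2 * (x - Real.cos ((n:ℝ)*x) * Real.sin ((n:ℝ)*x) / (n:ℝ)) * ξ^3 / 2 := by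
    intro x; simp [tOf]
  rw [show (fun x => θ₀ - tOf n ξ x / 2)
      = fun x => θ₀ - 2 * (x - Real.cos ((n:ℝ)*x) * Real.sin ((n:ℝ)*x) / (n:ℝ)) * ξ^3 / 2
      from funext heq]
  refine h2.congr_deriv ?_
  have hp := Real.sin_sq_add_cos_sq ((n:ℝ)*T)
  field_simp
  linear_combination (ξ^3) * hp

lemma hd_U (n : ℕ) (hn : (n:ℝ) ≠ 0) (ξ θ₀ T : ℝ) :
    HasDerivAt (U0e n ξ θ₀) (dUf n ξ θ₀ T) T := by
  have hc : HasDerivAt (fun x => Real.cos (θ₀ - tOf n ξ x/2))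
      (-Real.sin (θ₀ - tOf n ξ T/2) * (-(2 * Real.sin ((n:ℝ)*T)^2 * ξ^3))) T :=
    (Real.hasDerivAt_cos _).comp T (hd_th n hn ξ θ₀ T)
  have h := hc.mul (hd_sin n T)
  refine h.congr_deriv ?_
  simp only [dUf]
  ring

lemma hd_V (n : ℕ) (hn : (n:ℝ) ≠ 0) (ξ θ₀ T : ℝ) :
    HasDerivAt (V0e n ξ θ₀) (dVf n ξ θ₀ T) T := by
  have hs : HasDerivAt (fun x => Real.sin (θ₀ - tOf n ξ x/2))
      (Real.cos (θ₀ - tOf n ξ T/2) * (-(2 * Real.sin ((n:ℝ)*T)^2 * ξ^3))) T :=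
    (Real.hasDerivAt_sin _).comp T (hd_th n hn ξ θ₀ T)
  have h := hs.mul (hd_sin n T)
  refine h.congr_deriv ?_
  simp only [dVf]
  ring

lemma hd_dU (n : ℕ) (hn : (n:ℝ) ≠ 0) (ξ θ₀ T : ℝ) :
    HasDerivAt (dUf n ξ θ₀)
      (-4 * Real.cos (θ₀ - tOf n ξ T/2) * Real.sin ((n:ℝ)*T)^5 * ξ^6
        + 8 * (n:ℝ) * Real.sin (θ₀ - tOf n ξ T/2) * Real.sin ((n:ℝ)*T)^2
            * Real.cos ((n:ℝ)*T) * ξ^3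
        - (n:ℝ)^2 * Real.cos (θ₀ - tOf n ξ T/2) * Real.sin ((n:ℝ)*T)) T := by
  have hth := hd_th n hn ξ θ₀ T
  have hs : HasDerivAt (fun x => Real.sin (θ₀ - tOf n ξ x/2))
      (Real.cos (θ₀ - tOf n ξ T/2) * (-(2 * Real.sin ((n:ℝ)*T)^2 * ξ^3))) T :=
    (Real.hasDerivAt_sin _).comp T hth
  have hc : HasDerivAt (fun x => Real.cos (θ₀ - tOf n ξ x/2))
      (-Real.sin (θ₀ - tOf n ξ T/2) * (-(2 * Real.sin ((n:ℝ)*T)^2 * ξ^3))) T :=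
    (Real.hasDerivAt_cos _).comp T hth
  have hs3 : HasDerivAt (fun x : ℝ => Real.sin ((n:ℝ)*x)^3)
      (3 * Real.sin ((n:ℝ)*T)^2 * ((n:ℝ) * Real.cos ((n:ℝ)*T))) T := by
    simpa [mul_comm, mul_assoc] using (hd_sin n T).fun_pow 3
  have hA := ((hs.const_mul 2).mul hs3).mul_const (ξ^3)
  have hB := (hc.const_mul (n:ℝ)).mul (hd_cos n T)
  have h := hA.add hB
  refine h.congr_deriv ?_
  ring

lemma hd_dV (n : ℕ) (hn : (n:ℝ) ≠ 0) (ξ θ₀ T : ℝ) :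
    HasDerivAt (dVf n ξ θ₀)
      (-4 * Real.sin (θ₀ - tOf n ξ T/2) * Real.sin ((n:ℝ)*T)^5 * ξ^6
        - 8 * (n:ℝ) * Real.cos (θ₀ - tOf n ξ T/2) * Real.sin ((n:ℝ)*T)^2
            * Real.cos ((n:ℝ)*T) * ξ^3
        - (n:ℝ)^2 * Real.sin (θ₀ - tOf n ξ T/2) * Real.sin ((n:ℝ)*T)) T := by
  have hth := hd_th n hn ξ θ₀ T
  have hs : HasDerivAt (fun x => Real.sin (θ₀ - tOf n ξ x/2))
      (Real.cos (θ₀ - tOf n ξ T/2) * (-(2 * Real.sin ((n:ℝ)*T)^2 * ξ^3))) T :=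
    (Real.hasDerivAt_sin _).comp T hth
  have hc : HasDerivAt (fun x => Real.cos (θ₀ - tOf n ξ x/2))
      (-Real.sin (θ₀ - tOf n ξ T/2) * (-(2 * Real.sin ((n:ℝ)*T)^2 * ξ^3))) T :=
    (Real.hasDerivAt_cos _).comp T hth
  have hs3 : HasDerivAt (fun x : ℝ => Real.sin ((n:ℝ)*x)^3)
      (3 * Real.sin ((n:ℝ)*T)^2 * ((n:ℝ) * Real.cos ((n:ℝ)*T))) T := by
    simpa [mul_comm, mul_assoc] using (hd_sin n T).fun_pow 3
  have hA := ((hc.const_mul (-2)).mul hs3).mul_const (ξ^3)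
  have hB := (hs.const_mul (n:ℝ)).mul (hd_cos n T)
  have h := hA.add hB
  refine h.congr_deriv ?_
  ring

/-- The curve `𝐔₀ᵉ = (𝒰₀ᵉ, 𝒱₀ᵉ, d𝒰₀ᵉ/dT, d𝒱₀ᵉ/dT)` is the solution of the unperturbed
system `𝐔' = F₀(𝐔)` with initial condition `(0, 0, n cos θ₀, n sin θ₀)`. -/
theorem unperturbed_ejection_solution (n : ℕ) (hn : 1 ≤ n) (ξ : ℝ) (hξ : 0 < ξ)
    (θ₀ : ℝ) :
    U0e n ξ θ₀ 0 = 0 ∧ V0e n ξ θ₀ 0 = 0 ∧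
    deriv (U0e n ξ θ₀) 0 = (n:ℝ) * Real.cos θ₀ ∧
    deriv (V0e n ξ θ₀) 0 = (n:ℝ) * Real.sin θ₀ ∧
    (∀ T : ℝ,
      deriv (deriv (U0e n ξ θ₀)) T =
        -(n:ℝ)^2 * U0e n ξ θ₀ T
        + 8*((U0e n ξ θ₀ T)^2 + (V0e n ξ θ₀ T)^2)*(deriv (V0e n ξ θ₀) T)*ξ^3
        + 12*((U0e n ξ θ₀ T)^2 + (V0e n ξ θ₀ T)^2)^2*(U0e n ξ θ₀ T)*ξ^6) ∧
    (∀ T : ℝ,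
      deriv (deriv (V0e n ξ θ₀)) T =
        -(n:ℝ)^2 * V0e n ξ θ₀ T
        - 8*((U0e n ξ θ₀ T)^2 + (V0e n ξ θ₀ T)^2)*(deriv (U0e n ξ θ₀) T)*ξ^3
        + 12*((U0e n ξ θ₀ T)^2 + (V0e n ξ θ₀ T)^2)^2*(V0e n ξ θ₀ T)*ξ^6) := by
  have hn0 : (n:ℝ) ≠ 0 := by
    exact Nat.cast_ne_zero.mpr (by omega)
  have hdU : deriv (U0e n ξ θ₀) = dUf n ξ θ₀ :=
    funext fun T => (hd_U n hn0 ξ θ₀ T).deriv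
  have hdV : deriv (V0e n ξ θ₀) = dVf n ξ θ₀ :=
    funext fun T => (hd_V n hn0 ξ θ₀ T).deriv
  have hsq : ∀ T : ℝ, (U0e n ξ θ₀ T)^2 + (V0e n ξ θ₀ T)^2 = Real.sin ((n:ℝ)*T)^2 := by
    intro T
    simp only [U0e, V0e]
    linear_combination (Real.sin ((n:ℝ)*T))^2
      * Real.sin_sq_add_cos_sq (θ₀ - tOf n ξ T/2)
  refine ⟨by simp [U0e], by simp [V0e], ?_, ?_, ?_, ?_⟩
  · rw [hdU]; simp [dUf, tOf]
  · rw [hdV]; simp [dVf, tOf]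
  · intro T
    rw [hdU, hdV, (hd_dU n hn0 ξ θ₀ T).deriv, hsq T]
    simp only [U0e, V0e, dVf]
    ring
  · intro T
    rw [hdV, hdU, (hd_dV n hn0 ξ θ₀ T).deriv, hsq T]
    simp only [U0e, V0e, dUf]
    ring

end
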